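/- The row-adjusted join matrix factorizes as [S]_{f_1,…,f_n} = Υ' (E'_{D'})^T, i.e. for all i, j ∈ {1,…,n} we have f_i(x_i ∨ x_j) = Σ_{k=1}^{m'} (E'_{D'})_{ik} Ψ'_{D',f_i}(d'_k) (E'_{D'})_{jk}. -/

import Mathlib

open Finset
open scoped Classical

/-- **Structure theorem for row-adjusted join matrices.**
Let `d' : Fin m → P` be an injective, compatibly ordered listing of a set `D'`
containing all joins `x i ⊔ x j`, `μD'` the Möbius function of the finite poset
`D'`, `Ψ'_{D',f i}(d' k) = ∑_{d' k ≤ d' v} f i (d' v) * μD' k v`, and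
`(E'_{D'})_{i k} = 1` iff `x i ≤ d' k`. Then
`f i (x i ⊔ x j) = ∑ k, (E'_{D'})_{i k} * Ψ'_{D',f i}(d' k) * (E'_{D'})_{j k}`,
i.e. `[S]_{f₁,…,fₙ} = Υ' (E'_{D'})ᵀ`. -/
theorem row_adjusted_join_matrix_factorization
    {P : Type*} [Lattice P] {n m : ℕ}
    (x : Fin n → P) (d : Fin m → P) (f : Fin n → P → ℂ)
    (μD : Fin m → Fin m → ℂ)
    (hxinj : Function.Injective x)
    (hxord : ∀ i j : Fin n, x i ≤ x j → i ≤ j)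
    (hdinj : Function.Injective d)
    (hdord : ∀ i j : Fin m, d i ≤ d j → i ≤ j)
    (hD : ∀ i j : Fin n, ∃ k : Fin m, d k = x i ⊔ x j)
    (hμ0 : ∀ i j : Fin m, ¬ d i ≤ d j → μD i j = 0)
    (hμ : ∀ i j : Fin m, d i ≤ d j →
      (∑ v ∈ univ.filter (fun v => d i ≤ d v ∧ d v ≤ d j), μD i v) =
        if i = j then 1 else 0) :
    ∀ i j : Fin n,
      f i (x i ⊔ x j) =
        ∑ k : Fin m,
          (if x i ≤ d k then (1 : ℂ) else 0) *
            (∑ v ∈ univ.filter (fun v => d k ≤ d v), f i (d v) * μD k v) *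
            (if x j ≤ d k then (1 : ℂ) else 0) := by
  intro i j
  obtain ⟨k₀, hk₀⟩ := hD i j
  set Z : Matrix (Fin m) (Fin m) ℂ := fun a b => if d a ≤ d b then 1 else 0 with hZ
  set M : Matrix (Fin m) (Fin m) ℂ := fun a b => μD a b with hM
  have hMZ : M * Z = 1 := by
    ext a b
    simp only [Matrix.mul_apply, Matrix.one_apply]
    simp only [hZ, hM]
    have hterm : ∀ v, μD a v * (if d v ≤ d b then (1:ℂ) else 0) =
        if d a ≤ d v ∧ d v ≤ d b then μD a v else 0 := by
      intro v
      by_cases h1 : d a ≤ d v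
      · by_cases h2 : d v ≤ d b <;> simp [h1, h2]
      · simp [hμ0 a v h1, h1]
    rw [Finset.sum_congr rfl (fun v _ => hterm v), ← Finset.sum_filter]
    by_cases hab : d a ≤ d b
    · exact hμ a b hab
    · have hab' : a ≠ b := fun h => hab (h ▸ le_refl _)
      rw [if_neg hab']
      apply Finset.sum_eq_zero
      intro v hv
      simp only [Finset.mem_filter] at hv
      exact absurd (hv.2.1.trans hv.2.2) hab
  have hZM : Z * M = 1 := mul_eq_one_comm.mp hMZ
  have step1 : ∀ k : Fin m,
      (if x i ≤ d k then (1 : ℂ) else 0) *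
        (∑ v ∈ univ.filter (fun v => d k ≤ d v), f i (d v) * μD k v) *
        (if x j ≤ d k then (1 : ℂ) else 0) =
      Z k₀ k * ∑ v : Fin m, f i (d v) * μD k v := by
    intro k
    have hinner : (∑ v ∈ univ.filter (fun v => d k ≤ d v), f i (d v) * μD k v) =
        ∑ v : Fin m, f i (d v) * μD k v := by
      rw [Finset.sum_filter]
      refine Finset.sum_congr rfl fun v _ => ?_
      by_cases h : d k ≤ d v
      · simp [h]
      · simp [h, hμ0 k v h]
    rw [hinner]
    by_cases hik : x i ≤ d k <;> by_cases hjk : x j ≤ d k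
    · have h : d k₀ ≤ d k := by rw [hk₀]; exact sup_le hik hjk
      simp [hZ, hik, hjk, h, mul_comm]
    · have h : ¬ d k₀ ≤ d k := fun h => hjk (le_trans le_sup_right (hk₀ ▸ h))
      simp [hZ, hik, hjk, h]
    · have h : ¬ d k₀ ≤ d k := fun h => hik (le_trans le_sup_left (hk₀ ▸ h))
      simp [hZ, hik, hjk, h]
    · have h : ¬ d k₀ ≤ d k := fun h => hik (le_trans le_sup_left (hk₀ ▸ h))
      simp [hZ, hik, hjk, h]
  rw [Finset.sum_congr rfl (fun k _ => step1 k)]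
  simp_rw [Finset.mul_sum]
  rw [Finset.sum_comm]
  have step2 : ∀ v : Fin m, (∑ k : Fin m, Z k₀ k * (f i (d v) * μD k v)) =
      f i (d v) * (Z * M) k₀ v := by
    intro v
    rw [Matrix.mul_apply, Finset.mul_sum]
    refine Finset.sum_congr rfl fun k _ => ?_
    simp [hM]; ring
  rw [Finset.sum_congr rfl (fun v _ => step2 v), hZM]
  simp only [Matrix.one_apply, mul_ite, mul_one, mul_zero]
  rw [Finset.sum_ite_eq]
  simp [hk₀]
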